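/- Let n ≥ 1 be an integer and let ρ_n : ℝ → [0,∞) be a continuous function supported in (a_n, a_{n−1}) with ∫_ℝ ρ_n(z) dz = 1 and ρ_n(r) ≤ 2/(n r) for all r > 0. Define ψ_n(x) := ∫_0^{|x|} ∫_0^y ρ_n(z) dz dy for x ∈ ℝ. Then: (i) ψ_n is even and twice continuously differentiable on ℝ; (ii) ψ_n'(r) = ∫_0^r ρ_n(z) dz for r ≥ 0 and ψ_n'(−r) = −ψ_n'(r), so that |ψ_n'(r)| ≤ 1 and r·ψ_n'(r) ≥ 0 for all r; (iii) ψ_n''(r) = ρ_n(|r|) ≥ 0 and |r|·ψ_n''(r) ≤ 2/n for all r; (iv) ψ_n, ψ_n' and ψ_n'' all vanish on the interval [−a_n, a_n]; (v) 0 ≤ |r| − ψ_n(r) ≤ a_{n−1} for all r ∈ ℝ, and in particular ψ_n(r) → |r| as n → ∞; (vi) if ρ_{n+1} is any continuous function supported in (a_{n+1}, a_n) with integral 1 and ρ_{n+1}(r) ≤ 2/((n+1) r) for r > 0, and ψ_{n+1} is defined from ρ_{n+1} in the same way, then ψ_{n+1}(r) ≥ ψ_n(r) for every r ∈ ℝ.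 -/

import Mathlib

open MeasureTheory

/-- The sequence `a n = exp(-n(n+1)/2)`. -/
noncomputable def a (n : ℕ) : ℝ := Real.exp (-((n : ℝ) * ((n : ℝ) + 1)) / 2)

/-- A continuous nonnegative function supported in `(a n, a (n-1))`, with total
integral `1` and satisfying `ρ r ≤ 2/(n r)` for `r > 0`. -/
def IsMollifier (n : ℕ) (ρ : ℝ → ℝ) : Prop :=
  Continuous ρ ∧ (∀ r, 0 ≤ ρ r) ∧
    Function.support ρ ⊆ Set.Ioo (a n) (a (n - 1)) ∧
    (∫ z, ρ z) = 1 ∧ ∀ r : ℝ, 0 < r → ρ r ≤ 2 / (n * r)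

/-- `psi ρ x = ∫_0^{|x|} ∫_0^y ρ(z) dz dy`. -/
noncomputable def psi (ρ : ℝ → ℝ) (x : ℝ) : ℝ :=
  ∫ y in (0:ℝ)..|x|, ∫ z in (0:ℝ)..y, ρ z

noncomputable def Fp (ρ : ℝ → ℝ) (y : ℝ) : ℝ := ∫ z in (0:ℝ)..y, ρ z
noncomputable def Gp (ρ : ℝ → ℝ) (x : ℝ) : ℝ := ∫ y in (0:ℝ)..x, Fp ρ y

lemma a_pos (n : ℕ) : 0 < a n := Real.exp_pos _

lemma a_lt (n : ℕ) (hn : 1 ≤ n) : a n < a (n - 1) := by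
  apply Real.exp_lt_exp.2
  have : (1:ℝ) ≤ (n:ℝ) := by exact_mod_cast hn
  have h : ((n - 1 : ℕ) : ℝ) = (n : ℝ) - 1 := by
    have := Nat.cast_sub hn (R := ℝ); simpa using this
  rw [h]; nlinarith

section Moll
variable {n : ℕ} {ρ : ℝ → ℝ} (hn : 1 ≤ n) (h : IsMollifier n ρ)

include h

lemma rho_zero {z : ℝ} (hz : z ≤ a n) : ρ z = 0 := by
  by_contra hne
  have := h.2.2.1 (Function.mem_support.2 hne)
  exact absurd this.1 (not_lt.2 hz)

lemma rho_intble : Integrable ρ := by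
  apply h.1.integrable_of_hasCompactSupport
  apply HasCompactSupport.of_support_subset_isCompact (isCompact_Icc (a := a n) (b := a (n-1)))
  exact h.2.2.1.trans Set.Ioo_subset_Icc_self

lemma hF : ∀ y, HasDerivAt (Fp ρ) (ρ y) y := fun y =>
  intervalIntegral.integral_hasDerivAt_right ((rho_intble h).intervalIntegrable)
    (h.1.stronglyMeasurableAtFilter _ _) h.1.continuousAt

lemma F_cont : Continuous (Fp ρ) := by
  have : Differentiable ℝ (Fp ρ) := fun y => (hF h y).differentiableAt
  exact this.continuous

lemma F_intble : ∀ c d : ℝ, IntervalIntegrable (Fp ρ) volume c d :=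
  fun c d => (F_cont h).intervalIntegrable c d

lemma hG : ∀ x, HasDerivAt (Gp ρ) (Fp ρ x) x := fun x =>
  intervalIntegral.integral_hasDerivAt_right (F_intble h _ _)
    ((F_cont h).stronglyMeasurableAtFilter _ _) (F_cont h).continuousAt

lemma F_zero {y : ℝ} (hy : y ≤ a n) : Fp ρ y = 0 := by
  rw [Fp, intervalIntegral.integral_congr (g := fun _ => (0:ℝ)), intervalIntegral.integral_zero]
  intro z hz
  rcases le_total y 0 with h0 | h0
  · rw [Set.uIcc_of_ge h0] at hz
    exact rho_zero h (hz.2.trans ((a_pos n).le))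
  · rw [Set.uIcc_of_le h0] at hz
    exact rho_zero h (hz.2.trans hy)

lemma G_zero {x : ℝ} (hx : x ≤ a n) : Gp ρ x = 0 := by
  rw [Gp, intervalIntegral.integral_congr (g := fun _ => (0:ℝ)), intervalIntegral.integral_zero]
  intro y hy
  rcases le_total x 0 with h0 | h0
  · rw [Set.uIcc_of_ge h0] at hy
    exact F_zero h (hy.2.trans ((a_pos n).le))
  · rw [Set.uIcc_of_le h0] at hy
    exact F_zero h (hy.2.trans hx)

lemma psi_eq (x : ℝ) : psi ρ x = Gp ρ x + Gp ρ (-x) := by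
  rcases le_total 0 x with hx | hx
  · have : Gp ρ (-x) = 0 := G_zero h (by linarith [a_pos n])
    rw [this, add_zero, psi, abs_of_nonneg hx]; rfl
  · have : Gp ρ x = 0 := G_zero h (hx.trans (a_pos n).le)
    rw [this, zero_add, psi, abs_of_nonpos hx]; rfl

lemma hPsi : ∀ r, HasDerivAt (psi ρ) (Fp ρ r - Fp ρ (-r)) r := by
  intro r
  have h1 : HasDerivAt (fun x => Gp ρ x + Gp ρ (-x)) (Fp ρ r + (Fp ρ (-r)) * (-1)) r :=
    (hG h r).add ((hG h (-r)).comp r (hasDerivAt_neg r))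
  have h2 : (Fp ρ r + (Fp ρ (-r)) * (-1)) = Fp ρ r - Fp ρ (-r) := by ring
  rw [h2] at h1
  exact h1.congr_of_eventuallyEq (Filter.Eventually.of_forall fun x => psi_eq h x)

lemma deriv_psi : deriv (psi ρ) = fun r => Fp ρ r - Fp ρ (-r) := funext fun r => (hPsi h r).deriv

lemma rho_abs (r : ℝ) : ρ r + ρ (-r) = ρ |r| := by
  rcases lt_trichotomy r 0 with h0 | h0 | h0
  · rw [abs_of_neg h0, rho_zero h (h0.le.trans (a_pos n).le), zero_add]
  · simp [h0, rho_zero h (a_pos n).le]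
  · rw [abs_of_pos h0, rho_zero h ((neg_nonpos.2 h0.le).trans (a_pos n).le), add_zero]

lemma hPsi2 : ∀ r, HasDerivAt (deriv (psi ρ)) (ρ |r|) r := by
  intro r
  have h1 : HasDerivAt (fun x => Fp ρ x - Fp ρ (-x)) (ρ r - (ρ (-r)) * (-1)) r :=
    (hF h r).sub ((hF h (-r)).comp r (hasDerivAt_neg r))
  have h2 : (ρ r - (ρ (-r)) * (-1)) = ρ |r| := by rw [← rho_abs h r]; ring
  rw [h2] at h1
  exact h1.congr_of_eventuallyEq (Filter.Eventually.of_forall fun x => by rw [deriv_psi h])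

lemma deriv2_psi (r : ℝ) : deriv (deriv (psi ρ)) r = ρ |r| := (hPsi2 h r).deriv

lemma F_nonneg {y : ℝ} (hy : 0 ≤ y) : 0 ≤ Fp ρ y :=
  intervalIntegral.integral_nonneg hy (fun z _ => h.2.1 z)

lemma F_le_one (y : ℝ) : Fp ρ y ≤ 1 := by
  rcases le_total y 0 with h0 | h0
  · rw [F_zero h (h0.trans (a_pos n).le)]; norm_num
  · rw [Fp, intervalIntegral.integral_of_le h0, ← h.2.2.2.1]
    exact setIntegral_le_integral (rho_intble h) (Filter.Eventually.of_forall h.2.1)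

lemma F_one {y : ℝ} (hy : a (n-1) ≤ y) : Fp ρ y = 1 := by
  have hy0 : (0:ℝ) ≤ y := (a_pos _).le.trans hy
  rw [Fp, intervalIntegral.integral_of_le hy0, ← h.2.2.2.1]
  apply setIntegral_eq_integral_of_forall_compl_eq_zero
  intro z hz
  by_contra hne
  have hm := h.2.2.1 (Function.mem_support.2 hne)
  exact hz ⟨(a_pos n).trans hm.1, hm.2.le.trans hy⟩

end Moll

lemma psi_abs (ρ : ℝ → ℝ) (r : ℝ) : psi ρ r = Gp ρ |r| := rfl

section Moll2
variable {n : ℕ} {ρ : ℝ → ℝ} (h : IsMollifier n ρ)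
include h

lemma psi_contDiff : ContDiff ℝ 2 (psi ρ) := by
  have heq : psi ρ = fun x => Gp ρ x + Gp ρ (-x) := funext (psi_eq h)
  have hG2 : ContDiff ℝ 2 (Gp ρ) := by
    rw [show (2 : WithTop ℕ∞) = 1 + 1 from rfl, contDiff_succ_iff_deriv]
    refine ⟨fun x => (hG h x).differentiableAt, by simp, ?_⟩
    have hdG : deriv (Gp ρ) = Fp ρ := funext fun x => (hG h x).deriv
    rw [hdG, contDiff_one_iff_deriv]
    refine ⟨fun y => (hF h y).differentiableAt, ?_⟩
    have hdF : deriv (Fp ρ) = ρ := funext fun y => (hF h y).deriv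
    rw [hdF]; exact h.1
  rw [heq]
  exact hG2.add (hG2.comp contDiff_neg)

lemma G_nonneg {s : ℝ} (hs : 0 ≤ s) : 0 ≤ Gp ρ s :=
  intervalIntegral.integral_nonneg hs (fun y hy => F_nonneg h hy.1)

lemma G_le {s : ℝ} (hs : 0 ≤ s) : Gp ρ s ≤ s := by
  have := intervalIntegral.integral_mono_on (μ := volume) hs (F_intble h 0 s)
    (intervalIntegrable_const (c := (1:ℝ))) (fun x _ => F_le_one h x)
  simpa [Gp] using this

lemma G_ge {s : ℝ} (hs : 0 ≤ s) : s - a (n-1) ≤ Gp ρ s := by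
  rcases le_total s (a (n-1)) with hs2 | hs2
  · have := G_nonneg h hs; linarith
  · have key : Gp ρ s = (∫ y in (0:ℝ)..(a (n-1)), Fp ρ y) + ∫ y in (a (n-1))..s, Fp ρ y := by
      rw [Gp, ← intervalIntegral.integral_add_adjacent_intervals (F_intble h 0 (a (n-1)))
        (F_intble h (a (n-1)) s)]
    have h1 : 0 ≤ ∫ y in (0:ℝ)..(a (n-1)), Fp ρ y :=
      intervalIntegral.integral_nonneg (a_pos _).le (fun y hy => F_nonneg h hy.1)
    have h2 : (∫ y in (a (n-1))..s, Fp ρ y) = s - a (n-1) := by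
      rw [intervalIntegral.integral_congr (g := fun _ => (1:ℝ))]
      · simp
      · intro y hy
        rw [Set.uIcc_of_le hs2] at hy
        exact F_one h hy.1
    rw [key, h2]; linarith

end Moll2

lemma a_tendsto : Filter.Tendsto a Filter.atTop (nhds 0) := by
  have hb : ∀ m : ℕ, a m ≤ Real.exp (-((m:ℝ)/2)) := by
    intro m
    apply Real.exp_le_exp.2
    have : (0:ℝ) ≤ (m:ℝ) := Nat.cast_nonneg m
    nlinarith [sq_nonneg ((m:ℝ))]
  have hlim : Filter.Tendsto (fun m : ℕ => Real.exp (-((m:ℝ)/2))) Filter.atTop (nhds 0) :=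
    Real.tendsto_exp_neg_atTop_nhds_zero.comp
      (tendsto_natCast_atTop_atTop.atTop_div_const two_pos)
  exact squeeze_zero (fun m => (a_pos m).le) hb hlim


theorem stmt_2 (n : ℕ) (hn : 1 ≤ n) (ρ : ℝ → ℝ) (hρ : IsMollifier n ρ) :
    -- (i) even and C²
    ((∀ x : ℝ, psi ρ (-x) = psi ρ x) ∧ ContDiff ℝ 2 (psi ρ)) ∧
    -- (ii) the first derivative
    ((∀ r : ℝ, 0 ≤ r → deriv (psi ρ) r = ∫ z in (0:ℝ)..r, ρ z) ∧
      (∀ r : ℝ, deriv (psi ρ) (-r) = -deriv (psi ρ) r) ∧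
      (∀ r : ℝ, |deriv (psi ρ) r| ≤ 1) ∧
      (∀ r : ℝ, 0 ≤ r * deriv (psi ρ) r)) ∧
    -- (iii) the second derivative
    ((∀ r : ℝ, deriv (deriv (psi ρ)) r = ρ |r|) ∧
      (∀ r : ℝ, 0 ≤ deriv (deriv (psi ρ)) r) ∧
      (∀ r : ℝ, |r| * deriv (deriv (psi ρ)) r ≤ 2 / n)) ∧
    -- (iv) vanishing near the origin
    (∀ r ∈ Set.Icc (-(a n)) (a n),
      psi ρ r = 0 ∧ deriv (psi ρ) r = 0 ∧ deriv (deriv (psi ρ)) r = 0) ∧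
    -- (v) approximation of |r|
    (∀ r : ℝ, 0 ≤ |r| - psi ρ r ∧ |r| - psi ρ r ≤ a (n - 1)) ∧
    (∀ P : ℕ → ℝ → ℝ, (∀ m : ℕ, 1 ≤ m → IsMollifier m (P m)) →
      ∀ r : ℝ, Filter.Tendsto (fun m => psi (P m) r) Filter.atTop (nhds |r|)) ∧
    -- (vi) monotonicity in n
    (∀ ρ' : ℝ → ℝ, IsMollifier (n + 1) ρ' → ∀ r : ℝ, psi ρ r ≤ psi ρ' r) := by

  have hd1 : ∀ r, deriv (psi ρ) r = Fp ρ r - Fp ρ (-r) := fun r => (hPsi hρ r).deriv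
  have hd2 : ∀ r, deriv (deriv (psi ρ)) r = ρ |r| := deriv2_psi hρ
  have hnpos : (0:ℝ) < n := by exact_mod_cast hn
  refine ⟨⟨?_, psi_contDiff hρ⟩, ⟨?_, ?_, ?_, ?_⟩, ⟨hd2, ?_, ?_⟩, ?_, ?_, ?_, ?_⟩
  · intro x; rw [psi_abs, psi_abs, abs_neg]
  · intro r hr
    rw [hd1, F_zero hρ (by linarith [a_pos n] : -r ≤ a n), sub_zero]; rfl
  · intro r; rw [hd1, hd1, neg_neg]; ring
  · intro r
    rcases le_total 0 r with hr | hr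
    · rw [hd1, F_zero hρ (by linarith [a_pos n] : -r ≤ a n), sub_zero,
        abs_of_nonneg (F_nonneg hρ hr)]
      exact F_le_one hρ r
    · rw [hd1, F_zero hρ (hr.trans (a_pos n).le), zero_sub, abs_neg,
        abs_of_nonneg (F_nonneg hρ (by linarith))]
      exact F_le_one hρ (-r)
  · intro r
    rcases le_total 0 r with hr | hr
    · rw [hd1, F_zero hρ (by linarith [a_pos n] : -r ≤ a n), sub_zero]
      exact mul_nonneg hr (F_nonneg hρ hr)
    · rw [hd1, F_zero hρ (hr.trans (a_pos n).le), zero_sub]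
      exact mul_nonneg_of_nonpos_of_nonpos hr (neg_nonpos.2 (F_nonneg hρ (by linarith)))
  · intro r; rw [hd2]; exact hρ.2.1 _
  · intro r
    rcases eq_or_lt_of_le (abs_nonneg r) with h0 | h0
    · rw [← h0, zero_mul]; positivity
    · rw [hd2]
      have hb := hρ.2.2.2.2 |r| h0
      calc |r| * ρ |r| ≤ |r| * (2 / (n * |r|)) :=
            mul_le_mul_of_nonneg_left hb (abs_nonneg r)
        _ = 2 / n := by field_simp
  · rintro r ⟨hr1, hr2⟩
    have habs : |r| ≤ a n := abs_le.2 ⟨hr1, hr2⟩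
    refine ⟨?_, ?_, ?_⟩
    · rw [psi_abs, G_zero hρ habs]
    · rw [hd1, F_zero hρ hr2, F_zero hρ (by linarith : -r ≤ a n), sub_zero]
    · rw [hd2, rho_zero hρ habs]
  · intro r
    constructor
    · rw [psi_abs]; linarith [G_le hρ (abs_nonneg r)]
    · rw [psi_abs]; linarith [G_ge hρ (abs_nonneg r)]
  · intro P hP r
    have hlow : Filter.Tendsto (fun m : ℕ => |r| - a (m - 1)) Filter.atTop (nhds |r|) := by
      have h1 : Filter.Tendsto (fun m : ℕ => a (m - 1)) Filter.atTop (nhds 0) :=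
        a_tendsto.comp (Filter.tendsto_sub_atTop_nat 1)
      have := Filter.Tendsto.sub (tendsto_const_nhds (x := |r|)) h1
      simpa using this
    apply tendsto_of_tendsto_of_tendsto_of_le_of_le' hlow
      (tendsto_const_nhds (x := |r|))
    · filter_upwards [Filter.eventually_ge_atTop 1] with m hm
      have := G_ge (hP m hm) (abs_nonneg r)
      rw [psi_abs]; linarith
    · filter_upwards [Filter.eventually_ge_atTop 1] with m hm
      rw [psi_abs]; exact G_le (hP m hm) (abs_nonneg r)
  · intro ρ' hρ' r
    rw [psi_abs, psi_abs]
    have key : ∀ s ∈ Set.Icc (0:ℝ) |r|, Fp ρ s ≤ Fp ρ' s := by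
      intro s _
      rcases le_total s (a n) with hs | hs
      · rw [F_zero hρ hs]
        rcases le_total s 0 with h0 | h0
        · rw [F_zero hρ' (h0.trans (a_pos _).le)]
        · exact F_nonneg hρ' h0
      · have h1 : Fp ρ' s = 1 := F_one hρ' (by simpa using hs)
        rw [h1]; exact F_le_one hρ s
    exact intervalIntegral.integral_mono_on (abs_nonneg r) (F_intble hρ 0 _)
      (F_intble hρ' 0 _) key
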